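/- Let A ⊆ ℕ be nonempty and co-infinite. Then Spec⇒(R_A, Id) = {d : deg_T(A) ≤ d}, the cone of Turing degrees above the Turing degree of A. -/

import Mathlib

/-- `RecursiveIn' O f` means the partial function `f` is partial recursive in the
(total) oracle `O`. -/
inductive RecursiveIn' (O : ℕ → ℕ) : (ℕ →. ℕ) → Prop
  | zero : RecursiveIn' O (pure 0)
  | succ : RecursiveIn' O Nat.succ
  | left : RecursiveIn' O ↑fun n : ℕ => n.unpair.1
  | right : RecursiveIn' O ↑fun n : ℕ => n.unpair.2
  | oracle : RecursiveIn' O ↑O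
  | pair {f g} : RecursiveIn' O f → RecursiveIn' O g →
      RecursiveIn' O fun n => Nat.pair <$> f n <*> g n
  | comp {f g} : RecursiveIn' O f → RecursiveIn' O g →
      RecursiveIn' O fun n => g n >>= f
  | prec {f g} : RecursiveIn' O f → RecursiveIn' O g →
      RecursiveIn' O (Nat.unpaired fun a n =>
        n.rec (f a) fun y IH => do let i ← IH; g (Nat.pair a (Nat.pair y i)))
  | rfind {f} : RecursiveIn' O f →
      RecursiveIn' O fun a => Nat.rfind fun n => (fun m => m = 0) <$> f (Nat.pair a n)

/-- Turing reducibility between total functions on `ℕ`. -/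
def TuringReducible' (f g : ℕ → ℕ) : Prop := RecursiveIn' g ↑f

/-- Turing equivalence of total functions on `ℕ`. -/
def TuringEquivalent' (f g : ℕ → ℕ) : Prop := TuringReducible' f g ∧ TuringReducible' g f

theorem TuringReducible'.refl (f : ℕ → ℕ) : TuringReducible' f f := RecursiveIn'.oracle

theorem RecursiveIn'.trans' {f : ℕ →. ℕ} {g h : ℕ → ℕ}
    (hf : RecursiveIn' g f) (hg : TuringReducible' g h) : RecursiveIn' h f := by
  induction hf with
  | zero => exact .zero
  | succ => exact .succ
  | left => exact .left
  | right => exact .right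
  | oracle => exact hg
  | pair _ _ ih₁ ih₂ => exact .pair ih₁ ih₂
  | comp _ _ ih₁ ih₂ => exact .comp ih₁ ih₂
  | prec _ _ ih₁ ih₂ => exact .prec ih₁ ih₂
  | rfind _ ih => exact .rfind ih

theorem TuringReducible'.trans {f g h : ℕ → ℕ}
    (h₁ : TuringReducible' f g) (h₂ : TuringReducible' g h) : TuringReducible' f h :=
  RecursiveIn'.trans' h₁ h₂

/-- The setoid of Turing equivalence. -/
def turingSetoid : Setoid (ℕ → ℕ) :=
  ⟨TuringEquivalent',
    fun f => ⟨.refl f, .refl f⟩,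
    fun ⟨h₁, h₂⟩ => ⟨h₂, h₁⟩,
    fun ⟨a₁, a₂⟩ ⟨b₁, b₂⟩ => ⟨a₁.trans b₁, b₂.trans a₂⟩⟩

/-- Turing degrees. -/
def TuringDegree' : Type := Quotient turingSetoid

/-- The Turing degree of a total function. -/
def TuringDegree'.deg (f : ℕ → ℕ) : TuringDegree' := Quotient.mk turingSetoid f

instance : LE TuringDegree' :=
  ⟨fun d₁ d₂ =>
    Quotient.liftOn₂ d₁ d₂ TuringReducible'
      (fun _ _ _ _ h h' =>
        propext ⟨fun hr => (h.2.trans hr).trans h'.1, fun hr => (h.1.trans hr).trans h'.2⟩)⟩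

instance : LT TuringDegree' := ⟨fun d₁ d₂ => d₁ ≤ d₂ ∧ ¬d₂ ≤ d₁⟩

/-- The least Turing degree. -/
def TuringDegree'.zero : TuringDegree' := TuringDegree'.deg fun _ => 0

/-- A partial function is computable in a Turing degree if it is recursive in some
(equivalently, any) representative of that degree. -/
def TuringDegree'.ComputableIn (d : TuringDegree') (f : ℕ →. ℕ) : Prop :=
  Quotient.liftOn d (fun g => RecursiveIn' g f)
    (fun _ _ h => propext ⟨fun hr => hr.trans' h.1, fun hr => hr.trans' h.2⟩)

open Classical in
/-- The characteristic function of a set of naturals. -/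
noncomputable def charFun (A : Set ℕ) : ℕ → ℕ := fun n => if n ∈ A then 1 else 0

/-- Turing reducibility between sets of naturals. -/
noncomputable def SetTuringReducible (A B : Set ℕ) : Prop :=
  TuringReducible' (charFun A) (charFun B)

/-- The Turing degree of a set of naturals. -/
noncomputable def TuringDegree'.degSet (A : Set ℕ) : TuringDegree' :=
  TuringDegree'.deg (charFun A)

/-- `R` is `d`-computably reducible to `S`. -/
def ReducibleIn (d : TuringDegree') (R S : ℕ → ℕ → Prop) : Prop :=
  ∃ f : ℕ → ℕ, d.ComputableIn ↑f ∧ ∀ x y, R x y ↔ S (f x) (f y)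

/-- The reducibility spectrum of the pair `(R, S)`. -/
def SpecRed (R S : ℕ → ℕ → Prop) : Set TuringDegree' := {d | ReducibleIn d R S}

/-- The bi-reducibility spectrum of the pair `(R, S)`. -/
def SpecBired (R S : ℕ → ℕ → Prop) : Set TuringDegree' :=
  {d | ReducibleIn d R S ∧ ReducibleIn d S R}

/-- The equivalence relation generated by a set `A`: two numbers are equivalent
iff they are equal or both belong to `A`. -/
def genRel (A : Set ℕ) : ℕ → ℕ → Prop := fun x y => x = y ∨ (x ∈ A ∧ y ∈ A)

/-- A ceer: an equivalence relation whose set of pairs is computably enumerable. -/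
def Ceer (R : ℕ → ℕ → Prop) : Prop :=
  Equivalence R ∧ REPred fun p : ℕ × ℕ => R p.1 p.2

/-- A computably enumerable set of naturals. -/
def CePred (A : Set ℕ) : Prop := REPred (· ∈ A)

/-- A partial transversal of `R`: a set any two distinct elements of which are
`R`-inequivalent. -/
def PartialTransversal (R : ℕ → ℕ → Prop) (A : Set ℕ) : Prop :=
  ∀ x ∈ A, ∀ y ∈ A, x ≠ y → ¬R x y

/-- An introreducible set: an infinite set computable from each of its infinite subsets. -/
def Introreducible (B : Set ℕ) : Prop :=
  B.Infinite ∧ ∀ C : Set ℕ, C ⊆ B → C.Infinite → SetTuringReducible B C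

/-- For nonempty co-infinite `A`, `Spec⇒(R_A, Id)` is the cone of
Turing degrees above the degree of `A`. -/
theorem RecursiveIn'.of_partrec {O : ℕ → ℕ} {f : ℕ →. ℕ} (h : Nat.Partrec f) :
    RecursiveIn' O f := by
  induction h with
  | zero => exact .zero
  | succ => exact .succ
  | left => exact .left
  | right => exact .right
  | pair _ _ ih₁ ih₂ => exact .pair ih₁ ih₂
  | comp _ _ ih₁ ih₂ => exact .comp ih₁ ih₂
  | prec _ _ ih₁ ih₂ => exact .prec ih₁ ih₂
  | rfind _ ih => exact .rfind ih

theorem RecursiveIn'.totalComp {O h f : ℕ → ℕ} (hh : Nat.Primrec h)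
    (hf : RecursiveIn' O ↑f) : RecursiveIn' O ↑(fun n => h (f n)) := by
  have := RecursiveIn'.comp (RecursiveIn'.of_partrec (Nat.Partrec.of_primrec hh)) hf
  have heq : (fun n => (f : ℕ →. ℕ) n >>= (h : ℕ →. ℕ)) = ((fun n => h (f n) : ℕ → ℕ) : ℕ →. ℕ) := by
    funext n
    simp [PFun.coe_val]
    exact Part.bind_some _ _
  rwa [heq] at this

theorem RecursiveIn'.pairId {O c : ℕ → ℕ} (hc : RecursiveIn' O ↑c) :
    RecursiveIn' O ↑(fun n => Nat.pair n (c n)) := by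
  have hid : RecursiveIn' O ↑(id : ℕ → ℕ) :=
    RecursiveIn'.of_partrec (Nat.Partrec.of_primrec Nat.Primrec.id)
  have := RecursiveIn'.pair hid hc
  have heq : (fun n => Nat.pair <$> ((id : ℕ → ℕ) : ℕ →. ℕ) n <*> (c : ℕ →. ℕ) n)
      = ((fun n => Nat.pair n (c n) : ℕ → ℕ) : ℕ →. ℕ) := by
    funext n
    simp [PFun.coe_val, Seq.seq]
  rwa [heq] at this

theorem charFun_eq_zero {A : Set ℕ} {x : ℕ} : charFun A x = 0 ↔ x ∉ A := by
  unfold charFun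
  split <;> simp_all

theorem stmt_4 (A : Set ℕ) (hne : A.Nonempty) (hco : Aᶜ.Infinite) :
    SpecRed (genRel A) (fun x y => x = y) = {d | TuringDegree'.degSet A ≤ d} := by
  obtain ⟨a₀, ha₀⟩ := hne
  ext d
  induction d using Quotient.inductionOn with
  | h g =>
  constructor
  · rintro ⟨f, hcomp, hiff⟩
    have hcomp : RecursiveIn' g ↑f := hcomp
    -- x ∈ A ↔ f x = f a₀
    have hmem : ∀ x, x ∈ A ↔ f x = f a₀ := by
      intro x
      constructor
      · intro hx; exact (hiff x a₀).mp (Or.inr ⟨hx, ha₀⟩)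
      · intro h
        rcases (hiff x a₀).mpr h with rfl | ⟨hx, _⟩
        · exact ha₀
        · exact hx
    have hprim : Nat.Primrec (fun v : ℕ => if v = f a₀ then 1 else 0) := by
      rw [← Primrec.nat_iff]
      exact Primrec.ite (Primrec.eq.comp Primrec.id (Primrec.const (f a₀)))
        (Primrec.const 1) (Primrec.const 0)
    have hrec := RecursiveIn'.totalComp (O := g) hprim hcomp
    have heq : (fun n => if f n = f a₀ then 1 else 0) = charFun A := by
      funext n
      unfold charFun
      by_cases hn : n ∈ A
      · rw [if_pos hn, if_pos ((hmem n).mp hn)]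
      · rw [if_neg hn, if_neg (fun h => hn ((hmem n).mpr h))]
    rw [heq] at hrec
    exact hrec
  · intro hd
    have hA : RecursiveIn' g ↑(charFun A) := hd
    set F : ℕ → ℕ := fun x => if charFun A x = 0 then x else a₀ with hF
    have hprim : Nat.Primrec (fun m : ℕ => if m.unpair.2 = 0 then m.unpair.1 else a₀) := by
      rw [← Primrec.nat_iff]
      exact Primrec.ite (Primrec.eq.comp (Primrec.snd.comp Primrec.unpair) (Primrec.const 0))
        (Primrec.fst.comp Primrec.unpair) (Primrec.const a₀)
    have hrec := RecursiveIn'.totalComp (O := g) hprim (RecursiveIn'.pairId hA)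
    have heq : (fun n => if (Nat.pair n (charFun A n)).unpair.2 = 0
        then (Nat.pair n (charFun A n)).unpair.1 else a₀) = F := by
      funext n
      simp [hF, Nat.unpair_pair]
    rw [heq] at hrec
    refine ⟨F, hrec, fun x y => ?_⟩
    have Fx : x ∈ A → F x = a₀ := fun h => by
      simp [hF, if_neg (fun h0 => (charFun_eq_zero.mp h0) h)]
    have Fx' : x ∉ A → F x = x := fun h => by simp [hF, if_pos (charFun_eq_zero.mpr h)]
    have Fy : y ∈ A → F y = a₀ := fun h => by
      simp [hF, if_neg (fun h0 => (charFun_eq_zero.mp h0) h)]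
    have Fy' : y ∉ A → F y = y := fun h => by simp [hF, if_pos (charFun_eq_zero.mpr h)]
    constructor
    · rintro (rfl | ⟨hx, hy⟩)
      · rfl
      · rw [Fx hx, Fy hy]
    · intro hFeq
      by_cases hx : x ∈ A <;> by_cases hy : y ∈ A
      · exact Or.inr ⟨hx, hy⟩
      · rw [Fx hx, Fy' hy] at hFeq; exact absurd (hFeq ▸ ha₀) hy
      · rw [Fx' hx, Fy hy] at hFeq; exact absurd (hFeq ▸ ha₀) hx
      · rw [Fx' hx, Fy' hy] at hFeq; exact Or.inl hFeq
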